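/- Let C be a real symmetric positive definite n×n matrix with unit diagonal, b ∈ ℝⁿ, and 1 ≤ k with 2k ≤ n. Let ∅ = S₀ ⊂ S₁ ⊂ ⋯ ⊂ S_k be the Orthogonal Matching Pursuit sequence: S_{i+1} = S_i ∪ {m_i}, where m_i ∉ S_i maximizes |b_m − C_{m,S_i} (C_{S_i})⁻¹ b_{S_i}| over all m ∉ S_i (here C_{m,S} is the row vector (C_{m,j})_{j∈S}). Suppose γ > 0 with γ ≤ k is a lower bound on the submodularity ratio at S_k, i.e., for every L ⊆ S_k and every nonempty S disjoint from L with |S| ≤ k, Σ_{i∈S}(R²(L ∪ {i}) − R²(L)) ≥ γ · (R²(L ∪ S) − R²(L)). Then R²(S_k) ≥ (1 − e^{−γ·λmin(C,2k)}) · OPT, where OPT = max over subsets T of size at most k of R²(T). In particular, R²(S_k) ≥ (1 − e^{−λmin(C,2k)²}) · OPT. -/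

import Mathlib

open scoped Matrix

/-- The smallest eigenvalue of a real symmetric (Hermitian) matrix. -/
noncomputable def lambdaMin {m : Type*} [Fintype m] [DecidableEq m] (A : Matrix m m ℝ) : ℝ :=
  if hA : A.IsHermitian then ⨅ i, hA.eigenvalues i else 0

/-- The largest eigenvalue of a real symmetric (Hermitian) matrix. -/
noncomputable def lambdaMax {m : Type*} [Fintype m] [DecidableEq m] (A : Matrix m m ℝ) : ℝ :=
  if hA : A.IsHermitian then ⨆ i, hA.eigenvalues i else 0

/-- The principal submatrix of `C` on rows and columns in `S`. -/
def subMat {ι : Type*} (C : Matrix ι ι ℝ) (S : Finset ι) : Matrix S S ℝ :=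
  fun i j => C i j

/-- `R²(S) = b_Sᵀ (C_S)⁻¹ b_S`, the squared multiple correlation. -/
noncomputable def R2 {ι : Type*} [Fintype ι] [DecidableEq ι]
    (C : Matrix ι ι ℝ) (b : ι → ℝ) (S : Finset ι) : ℝ :=
  (fun i : S => b i) ⬝ᵥ (subMat C S)⁻¹ *ᵥ (fun i : S => b i)

/-- `λmin(C,k)`: the smallest eigenvalue of any `k × k` principal submatrix of `C`. -/
noncomputable def lambdaMinK {n : ℕ} (C : Matrix (Fin n) (Fin n) ℝ) (k : ℕ) : ℝ :=
  sInf {x | ∃ S : Finset (Fin n), S.card = k ∧ x = lambdaMin (subMat C S)}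

/-- `λmax(C,k)`: the largest eigenvalue of any `k × k` principal submatrix of `C`. -/
noncomputable def lambdaMaxK {n : ℕ} (C : Matrix (Fin n) (Fin n) ℝ) (k : ℕ) : ℝ :=
  sSup {x | ∃ S : Finset (Fin n), S.card = k ∧ x = lambdaMax (subMat C S)}

/-- `Cov(Res(Z|S), X_m) = b_m - C_{m,S} (C_S)⁻¹ b_S`. -/
noncomputable def resCov {ι : Type*} [Fintype ι] [DecidableEq ι]
    (C : Matrix ι ι ℝ) (b : ι → ℝ) (S : Finset ι) (m : ι) : ℝ :=
  b m - (fun i : S => C m i) ⬝ᵥ ((subMat C S)⁻¹ *ᵥ (fun i : S => b i))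

lemma lambdaMin_le_eigenvalues {m : Type*} [Fintype m] [DecidableEq m] [Nonempty m]
    {A : Matrix m m ℝ} (hA : A.IsHermitian) (i : m) :
    lambdaMin A ≤ hA.eigenvalues i := by
  rw [lambdaMin, dif_pos hA]
  exact ciInf_le (Set.Finite.bddBelow (Set.finite_range _)) i

lemma rayleigh_lower {m : Type*} [Fintype m] [DecidableEq m] [Nonempty m]
    {A : Matrix m m ℝ} (hA : A.IsHermitian) (x : m → ℝ) :
    lambdaMin A * (x ⬝ᵥ x) ≤ x ⬝ᵥ (A *ᵥ x) := by
  set c := lambdaMin A with hc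
  have hP : (A - c • 1).PosSemidef := by
    have hU : (hA.eigenvectorUnitary : Matrix m m ℝ) *
        (hA.eigenvectorUnitary : Matrix m m ℝ)ᴴ = 1 := by
      rw [← Matrix.star_eq_conjTranspose]
      exact (Matrix.mem_unitaryGroup_iff).mp hA.eigenvectorUnitary.2
    have hsp := hA.spectral_theorem
    rw [Unitary.conjStarAlgAut_apply, Matrix.star_eq_conjTranspose] at hsp
    have hd : Matrix.diagonal (fun i => hA.eigenvalues i - c) =
        Matrix.diagonal (RCLike.ofReal ∘ hA.eigenvalues) - c • (1 : Matrix m m ℝ) := by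
      ext i j
      by_cases h : i = j <;>
        simp [Matrix.diagonal_apply, Matrix.one_apply, h, Matrix.sub_apply]
    have h1 : A - c • 1 = (hA.eigenvectorUnitary : Matrix m m ℝ) *
        Matrix.diagonal (fun i => hA.eigenvalues i - c) *
        (hA.eigenvectorUnitary : Matrix m m ℝ)ᴴ := by
      rw [hd, Matrix.mul_sub, Matrix.sub_mul, ← hsp, Matrix.mul_smul, Matrix.mul_one,
        Matrix.smul_mul, hU]
    rw [h1]
    exact (Matrix.posSemidef_diagonal_iff.mpr (fun i => by
      simpa using sub_nonneg.mpr (lambdaMin_le_eigenvalues hA i))).mul_mul_conjTranspose_same _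
  have h2 := hP.dotProduct_mulVec_nonneg x
  simp only [Matrix.sub_mulVec, Matrix.smul_mulVec, Matrix.one_mulVec, dotProduct_sub,
    dotProduct_smul, star_trivial, RCLike.re_to_real, smul_eq_mul] at h2
  linarith

section Infra
variable {n : ℕ} (C : Matrix (Fin n) (Fin n) ℝ) (b : Fin n → ℝ)

/-- extension of a vector on `S` by zero -/
noncomputable def extVec (S : Finset (Fin n)) (y : S → ℝ) : Fin n → ℝ :=
  fun j => if h : j ∈ S then y ⟨j, h⟩ else 0

lemma extVec_not_mem {S : Finset (Fin n)} (y : S → ℝ) {j : Fin n} (hj : j ∉ S) :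
    extVec S y j = 0 := dif_neg hj

lemma extVec_mem {S : Finset (Fin n)} (y : S → ℝ) {j : Fin n} (hj : j ∈ S) :
    extVec S y j = y ⟨j, hj⟩ := dif_pos hj

lemma dot_extVec (S : Finset (Fin n)) (f : Fin n → ℝ) (y : S → ℝ) :
    f ⬝ᵥ extVec S y = (fun i : S => f i) ⬝ᵥ y := by
  unfold dotProduct
  calc ∑ i : Fin n, f i * extVec S y i
      = ∑ i ∈ S, f i * extVec S y i := by
        rw [Finset.sum_subset (Finset.subset_univ S)]
        intro x _ hx
        rw [extVec_not_mem _ hx, mul_zero]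
    _ = ∑ i ∈ S.attach, f (↑i) * extVec S y ↑i := (Finset.sum_attach S _).symm
    _ = ∑ i : S, (fun i : S => f i) i * y i := by
        apply Finset.sum_congr rfl
        intro i _
        rw [extVec_mem y i.2]

lemma mulVec_extVec (S : Finset (Fin n)) (y : S → ℝ) (j : Fin n) :
    (C *ᵥ extVec S y) j = (fun i : S => C j i) ⬝ᵥ y := by
  exact dot_extVec S (fun i => C j i) y

lemma mulVec_extVec_mem (S : Finset (Fin n)) (y : S → ℝ) {j : Fin n} (hj : j ∈ S) :
    (C *ᵥ extVec S y) j = (subMat C S *ᵥ y) ⟨j, hj⟩ := by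
  rw [mulVec_extVec]
  rfl

lemma extVec_dot_mulVec (S : Finset (Fin n)) (x y : S → ℝ) :
    extVec S x ⬝ᵥ (C *ᵥ extVec S y) = x ⬝ᵥ (subMat C S *ᵥ y) := by
  calc extVec S x ⬝ᵥ (C *ᵥ extVec S y) = (C *ᵥ extVec S y) ⬝ᵥ extVec S x :=
        dotProduct_comm _ _
    _ = (fun i : S => (C *ᵥ extVec S y) ↑i) ⬝ᵥ x := dot_extVec _ _ _
    _ = (subMat C S *ᵥ y) ⬝ᵥ x := by
        congr 1
        funext i
        exact mulVec_extVec_mem C S y i.2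
    _ = x ⬝ᵥ (subMat C S *ᵥ y) := dotProduct_comm _ _

lemma extVec_dot_extVec (S : Finset (Fin n)) (x y : S → ℝ) :
    extVec S x ⬝ᵥ extVec S y = x ⬝ᵥ y := by
  calc extVec S x ⬝ᵥ extVec S y = (fun i : S => extVec S x ↑i) ⬝ᵥ y :=
        dot_extVec _ _ _
    _ = x ⬝ᵥ y := by
        congr 1
        funext i
        exact extVec_mem x i.2

lemma subMat_posDef (hC : C.PosDef) (S : Finset (Fin n)) : (subMat C S).PosDef := by
  refine Matrix.posDef_iff_dotProduct_mulVec.mpr ⟨?_, ?_⟩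
  · have h1 := hC.1
    rw [Matrix.IsHermitian] at h1 ⊢
    ext i j
    have := congrFun (congrFun h1 (i : Fin n)) (j : Fin n)
    simpa [Matrix.conjTranspose_apply, subMat] using this
  · intro x hx
    have hex : extVec S x ≠ 0 := by
      intro h
      apply hx
      funext i
      have := congrFun h (i : Fin n)
      rwa [extVec_mem x i.2, Pi.zero_apply] at this
    have := hC.dotProduct_mulVec_pos hex
    rwa [star_trivial, extVec_dot_mulVec] at this

lemma subMat_mulVec_inv (hC : C.PosDef) (S : Finset (Fin n)) (u : S → ℝ) :
    subMat C S *ᵥ ((subMat C S)⁻¹ *ᵥ u) = u := by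
  rw [Matrix.mulVec_mulVec, Matrix.mul_nonsing_inv _
    (isUnit_iff_ne_zero.mpr (subMat_posDef C hC S).det_pos.ne'), Matrix.one_mulVec]

/-- the optimal coefficient vector for support `S`, extended by zero -/
noncomputable def xstar (S : Finset (Fin n)) : Fin n → ℝ :=
  extVec S ((subMat C S)⁻¹ *ᵥ (fun i : S => b i))

lemma xstar_not_mem {S : Finset (Fin n)} {j : Fin n} (hj : j ∉ S) : xstar C b S j = 0 :=
  extVec_not_mem _ hj

/-- first-order condition: `(C xstar)_j = b_j` for `j ∈ S` -/
lemma mulVec_xstar_mem (hC : C.PosDef) {S : Finset (Fin n)} {j : Fin n} (hj : j ∈ S) :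
    (C *ᵥ xstar C b S) j = b j := by
  rw [xstar, mulVec_extVec_mem C S _ hj]
  rw [subMat_mulVec_inv C hC S]

lemma resCov_eq (S : Finset (Fin n)) (m : Fin n) :
    resCov C b S m = b m - (C *ᵥ xstar C b S) m := by
  rw [resCov, xstar, mulVec_extVec C S]

/-- the objective `φ(x) = 2 bᵀx − xᵀCx` -/
noncomputable def phi (x : Fin n → ℝ) : ℝ := 2 * (b ⬝ᵥ x) - x ⬝ᵥ (C *ᵥ x)

lemma phi_xstar (hC : C.PosDef) (S : Finset (Fin n)) :
    phi C b (xstar C b S) = R2 C b S := by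
  rw [phi, xstar, dot_extVec, extVec_dot_mulVec, subMat_mulVec_inv C hC S,
    dotProduct_comm]
  rw [R2, dotProduct_comm]
  ring

lemma phi_add (hC : C.PosDef) (x w : Fin n → ℝ) :
    phi C b (x + w) = phi C b x + 2 * (w ⬝ᵥ (b - C *ᵥ x)) - w ⬝ᵥ (C *ᵥ w) := by
  have hsymm : ∀ u v : Fin n → ℝ, u ⬝ᵥ (C *ᵥ v) = v ⬝ᵥ (C *ᵥ u) := by
    intro u v
    rw [Matrix.dotProduct_mulVec, dotProduct_comm]
    congr 1
    have hCt : Cᵀ = C := by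
      ext i j
      simpa using congrFun (congrFun hC.1.eq i) j
    rw [← Matrix.mulVec_transpose, hCt]
  rw [phi, phi, dotProduct_add, Matrix.mulVec_add, dotProduct_add,
    add_dotProduct, add_dotProduct, dotProduct_sub, hsymm x w]
  rw [dotProduct_comm w b]
  ring

lemma cross_zero (hC : C.PosDef) (S : Finset (Fin n)) (w : Fin n → ℝ)
    (hsupp : ∀ j ∉ S, w j = 0) : w ⬝ᵥ (b - C *ᵥ xstar C b S) = 0 := by
  unfold dotProduct
  apply Finset.sum_eq_zero
  intro j _
  by_cases hj : j ∈ S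
  · simp [Pi.sub_apply, mulVec_xstar_mem C b hC hj]
  · simp [hsupp j hj]

lemma phi_le_R2 (hC : C.PosDef) (S : Finset (Fin n)) (x : Fin n → ℝ)
    (hsupp : ∀ j ∉ S, x j = 0) : phi C b x ≤ R2 C b S := by
  have hx : x = xstar C b S + (x - xstar C b S) := by ring
  rw [hx, phi_add C b hC, phi_xstar C b hC]
  have h1 : (x - xstar C b S) ⬝ᵥ (b - C *ᵥ xstar C b S) = 0 := by
    apply cross_zero C b hC S
    intro j hj
    simp [hsupp j hj, xstar_not_mem C b hj]
  have h2 : 0 ≤ (x - xstar C b S) ⬝ᵥ (C *ᵥ (x - xstar C b S)) := by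
    have := hC.posSemidef.dotProduct_mulVec_nonneg (x - xstar C b S)
    simpa using this
  rw [h1]
  linarith

lemma R2_mono (hC : C.PosDef) {S T : Finset (Fin n)} (hST : S ⊆ T) :
    R2 C b S ≤ R2 C b T := by
  rw [← phi_xstar C b hC S]
  exact phi_le_R2 C b hC T _ (fun j hj => xstar_not_mem C b (fun h => hj (hST h)))

lemma R2_empty : R2 C b ∅ = 0 := by
  rw [R2]
  unfold dotProduct
  apply Finset.sum_eq_zero
  intro j _
  exact absurd j.2 (Finset.notMem_empty _)

lemma R2_nonneg (hC : C.PosDef) (S : Finset (Fin n)) : 0 ≤ R2 C b S := by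
  rw [← R2_empty C b]
  exact R2_mono C b hC (Finset.empty_subset S)

/-- lower bound on single-element gain -/
lemma gain_lower (hC : C.PosDef) (hdiag : ∀ i, C i i = 1) (L : Finset (Fin n)) (i : Fin n) :
    R2 C b L + (resCov C b L i) ^ 2 ≤ R2 C b (insert i L) := by
  set r := resCov C b L i with hr
  have key : phi C b (xstar C b L + Pi.single i r) = R2 C b L + r ^ 2 := by
    rw [phi_add C b hC, phi_xstar C b hC]
    rw [single_dotProduct, Matrix.mulVec_single]
    have h1 : Pi.single i r ⬝ᵥ (MulOpposite.op r • C.col i) = r * (C i i * r) :=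
      single_dotProduct _ _ _
    rw [h1, hdiag i, Pi.sub_apply, ← resCov_eq C b L i, ← hr]
    ring
  rw [← key]
  apply phi_le_R2 C b hC
  intro j hj
  have hjL : j ∉ L := fun h => hj (Finset.mem_insert_of_mem h)
  have hji : j ≠ i := fun h => hj (h ▸ Finset.mem_insert_self i L)
  simp [xstar_not_mem C b hjL, Pi.single_eq_of_ne hji]

end Infra


lemma lambdaMin_pos {m : Type*} [Fintype m] [DecidableEq m] [Nonempty m]
    {A : Matrix m m ℝ} (hA : A.PosDef) : 0 < lambdaMin A := by
  have hmem : sInf (Set.range hA.1.eigenvalues) ∈ Set.range hA.1.eigenvalues :=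
    (Set.range_nonempty _).csInf_mem (Set.finite_range _)
  rw [sInf_range] at hmem
  obtain ⟨i, hi⟩ := hmem
  rw [lambdaMin, dif_pos hA.1, ← hi]
  exact hA.eigenvalues_pos i

lemma lambdaMin_le_one {m : Type*} [Fintype m] [DecidableEq m] [Nonempty m]
    {A : Matrix m m ℝ} (hA : A.IsHermitian) (i : m) (hAi : A i i = 1) :
    lambdaMin A ≤ 1 := by
  have h := rayleigh_lower hA (Pi.single i 1)
  rw [single_dotProduct, single_dotProduct, Matrix.mulVec_single] at h
  simp only [Pi.single_eq_same, mul_one, hAi] at h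
  simpa [hAi] using h

section Mu
variable {n k : ℕ} (C : Matrix (Fin n) (Fin n) ℝ) (b : Fin n → ℝ)

lemma lmk_finite : {x | ∃ S : Finset (Fin n), S.card = 2 * k ∧ x = lambdaMin (subMat C S)}.Finite := by
  apply Set.Finite.subset (Set.finite_range (fun S : Finset (Fin n) => lambdaMin (subMat C S)))
  rintro x ⟨S, -, rfl⟩
  exact ⟨S, rfl⟩

lemma lmk_nonempty (h2k : 2 * k ≤ n) :
    {x | ∃ S : Finset (Fin n), S.card = 2 * k ∧ x = lambdaMin (subMat C S)}.Nonempty := by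
  obtain ⟨S, -, hcard⟩ := Finset.exists_superset_card_eq (s := (∅ : Finset (Fin n)))
    (by simp) (by simpa using h2k)
  exact ⟨lambdaMin (subMat C S), S, hcard, rfl⟩

lemma lmk_le (S : Finset (Fin n)) (hS : S.card = 2 * k) :
    lambdaMinK C (2 * k) ≤ lambdaMin (subMat C S) :=
  csInf_le (lmk_finite C).bddBelow ⟨S, hS, rfl⟩

lemma lmk_mem (h2k : 2 * k ≤ n) : ∃ S : Finset (Fin n), S.card = 2 * k ∧
    lambdaMinK C (2 * k) = lambdaMin (subMat C S) :=
  Set.Nonempty.csInf_mem (lmk_nonempty C h2k) (lmk_finite C)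

lemma nonempty_coe_of_card_pos {S : Finset (Fin n)} (h : 0 < S.card) :
    Nonempty {x // x ∈ S} := by
  obtain ⟨i, hi⟩ := Finset.card_pos.mp h
  exact ⟨⟨i, hi⟩⟩

lemma lmk_pos (hC : C.PosDef) (hk1 : 1 ≤ k) (h2k : 2 * k ≤ n) :
    0 < lambdaMinK C (2 * k) := by
  obtain ⟨S, hS, heq⟩ := lmk_mem C h2k
  haveI := nonempty_coe_of_card_pos (S := S) (by omega : 0 < S.card)
  rw [heq]
  exact lambdaMin_pos (subMat_posDef C hC S)

lemma lmk_le_one (hC : C.PosDef) (hdiag : ∀ i, C i i = 1) (hk1 : 1 ≤ k) (h2k : 2 * k ≤ n) :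
    lambdaMinK C (2 * k) ≤ 1 := by
  obtain ⟨S, hS, heq⟩ := lmk_mem C h2k
  obtain ⟨i⟩ := nonempty_coe_of_card_pos (S := S) (by omega : 0 < S.card)
  haveI := nonempty_coe_of_card_pos (S := S) (by omega : 0 < S.card)
  rw [heq]
  exact lambdaMin_le_one (subMat_posDef C hC S).1 i (hdiag i)

/-- the key quadratic form bound for vectors of small support -/
lemma qbound (hC : C.PosDef) (hk1 : 1 ≤ k) (h2k : 2 * k ≤ n)
    (S : Finset (Fin n)) (hS : S.card ≤ 2 * k) (x : Fin n → ℝ)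
    (hsupp : ∀ j ∉ S, x j = 0) :
    lambdaMinK C (2 * k) * (x ⬝ᵥ x) ≤ x ⬝ᵥ (C *ᵥ x) := by
  obtain ⟨S', hSS', hcard⟩ := Finset.exists_superset_card_eq hS (by simpa using h2k)
  haveI := nonempty_coe_of_card_pos (S := S') (by omega : 0 < S'.card)
  have hx : x = extVec S' (fun i : S' => x i) := by
    funext j
    by_cases hj : j ∈ S'
    · rw [extVec_mem _ hj]
    · rw [extVec_not_mem _ hj, hsupp j (fun h => hj (hSS' h))]
  have h1 : x ⬝ᵥ (C *ᵥ x) = (fun i : S' => x i) ⬝ᵥ (subMat C S' *ᵥ (fun i : S' => x i)) := by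
    nth_rewrite 1 [hx]; nth_rewrite 2 [hx]
    exact extVec_dot_mulVec C S' _ _
  have h2 : x ⬝ᵥ x = (fun i : S' => x i) ⬝ᵥ (fun i : S' => x i) := by
    nth_rewrite 1 [hx]; nth_rewrite 2 [hx]
    exact extVec_dot_extVec S' _ _
  rw [h1, h2]
  calc lambdaMinK C (2 * k) * ((fun i : S' => x i) ⬝ᵥ (fun i : S' => x i))
      ≤ lambdaMin (subMat C S') * ((fun i : S' => x i) ⬝ᵥ (fun i : S' => x i)) := by
        apply mul_le_mul_of_nonneg_right (lmk_le C S' hcard)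
        exact Finset.sum_nonneg (fun i _ => mul_self_nonneg _)
    _ ≤ _ := rayleigh_lower (subMat_posDef C hC S').1 _

/-- joint gain upper bound -/
lemma gain_upper (hC : C.PosDef) (hk1 : 1 ≤ k) (h2k : 2 * k ≤ n)
    (L T : Finset (Fin n)) (hdisj : Disjoint L T)
    (hcard : (L ∪ T).card ≤ 2 * k) :
    R2 C b (L ∪ T) ≤ R2 C b L +
      (∑ i ∈ T, (resCov C b L i) ^ 2) / lambdaMinK C (2 * k) := by
  set μ := lambdaMinK C (2 * k) with hμ
  have hμpos : 0 < μ := lmk_pos C hC hk1 h2k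
  set M := L ∪ T with hM
  set z : Fin n → ℝ := xstar C b M - xstar C b L with hz
  have hzsupp : ∀ j ∉ M, z j = 0 := by
    intro j hj
    have hjL : j ∉ L := fun h => hj (Finset.mem_union_left T h)
    simp [hz, xstar_not_mem C b hj, xstar_not_mem C b hjL]
  have hexp : R2 C b M = R2 C b L + 2 * (z ⬝ᵥ (b - C *ᵥ xstar C b L)) - z ⬝ᵥ (C *ᵥ z) := by
    rw [← phi_xstar C b hC M, show xstar C b M = xstar C b L + z by rw [hz]; ring,
      phi_add C b hC, phi_xstar C b hC]
  have hcross : z ⬝ᵥ (b - C *ᵥ xstar C b L) = ∑ j ∈ T, z j * resCov C b L j := by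
    unfold dotProduct
    rw [← Finset.sum_subset (Finset.subset_univ T)]
    · apply Finset.sum_congr rfl
      intro j hj
      rw [resCov_eq C b L j]
      rfl
    · intro j _ hj
      by_cases hjL : j ∈ L
      · rw [Pi.sub_apply, mulVec_xstar_mem C b hC hjL, sub_self, mul_zero]
      · have hjM : j ∉ M := by
          rw [hM, Finset.mem_union]
          rintro (h | h) <;> [exact hjL h; exact hj h]
        rw [hzsupp j hjM, zero_mul]
  have hquad : μ * (∑ j ∈ T, z j ^ 2) ≤ z ⬝ᵥ (C *ᵥ z) := by
    have h1 : (∑ j ∈ T, z j ^ 2) ≤ z ⬝ᵥ z := by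
      calc ∑ j ∈ T, z j ^ 2 ≤ ∑ j : Fin n, z j ^ 2 :=
            Finset.sum_le_sum_of_subset_of_nonneg (Finset.subset_univ T)
              (fun j _ _ => sq_nonneg _)
        _ = z ⬝ᵥ z := Finset.sum_congr rfl (fun j _ => pow_two (z j))
    calc μ * (∑ j ∈ T, z j ^ 2) ≤ μ * (z ⬝ᵥ z) := mul_le_mul_of_nonneg_left h1 hμpos.le
      _ ≤ z ⬝ᵥ (C *ᵥ z) := qbound C hC hk1 h2k M hcard z hzsupp
  set P := ∑ j ∈ T, z j * resCov C b L j with hP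
  set Z := ∑ j ∈ T, z j ^ 2 with hZ
  set B := ∑ j ∈ T, (resCov C b L j) ^ 2 with hB
  have hPZB : P ^ 2 ≤ Z * B := Finset.sum_mul_sq_le_sq_mul_sq T _ _
  have hZ0 : 0 ≤ Z := Finset.sum_nonneg (fun j _ => sq_nonneg _)
  have hB0 : 0 ≤ B := Finset.sum_nonneg (fun j _ => sq_nonneg _)
  have key : 2 * P - μ * Z ≤ B / μ := by
    rw [le_div_iff₀ hμpos]
    rcases hB0.eq_or_lt with hBeq | hBpos
    · have hP2 : P ^ 2 ≤ 0 := by rw [← hBeq, mul_zero] at hPZB; exact hPZB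
      have hP0 : P = 0 := by nlinarith [sq_nonneg P]
      rw [hP0, ← hBeq]
      nlinarith [mul_nonneg (mul_nonneg hμpos.le hμpos.le) hZ0]
    · have h1 : B * ((2 * P - μ * Z) * μ) ≤ B * B := by
        nlinarith [sq_nonneg (B - μ * P),
          mul_nonneg (mul_nonneg hμpos.le hμpos.le) (sub_nonneg.mpr hPZB)]
      exact le_of_mul_le_mul_left h1 hBpos
  calc R2 C b M = R2 C b L + 2 * P - z ⬝ᵥ (C *ᵥ z) := by rw [hexp, hcross]
    _ ≤ R2 C b L + 2 * P - μ * Z := by linarith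
    _ ≤ R2 C b L + B / μ := by linarith

end Mu

/-- Orthogonal Matching Pursuit guarantee: if `0 < γ ≤ k` is a lower bound on the
submodularity ratio of `R²` at the selected set `S_k` with parameter `k`, then
`R²(S_k) ≥ (1 − e^{−γ·λmin(C,2k)}) · OPT`; in particular
`R²(S_k) ≥ (1 − e^{−λmin(C,2k)²}) · OPT`. -/
theorem omp_bound {n k : ℕ}
    (C : Matrix (Fin n) (Fin n) ℝ) (b : Fin n → ℝ) (hC : C.PosDef)
    (hdiag : ∀ i, C i i = 1) (hk1 : 1 ≤ k) (h2k : 2 * k ≤ n)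
    (γ : ℝ) (hγ : 0 < γ) (hγk : γ ≤ k)
    (S : ℕ → Finset (Fin n)) (hS0 : S 0 = ∅)
    (hgreedy : ∀ i < k, ∃ m ∉ S i, S (i + 1) = insert m (S i) ∧
      ∀ x ∉ S i, |resCov C b (S i) x| ≤ |resCov C b (S i) m|)
    (hsub : ∀ L T : Finset (Fin n), L ⊆ S k → Disjoint L T → T.Nonempty → T.card ≤ k →
      γ * (R2 C b (L ∪ T) - R2 C b L) ≤ ∑ i ∈ T, (R2 C b (L ∪ {i}) - R2 C b L)) :
    (1 - Real.exp (-(γ * lambdaMinK C (2 * k)))) *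
        sSup {x | ∃ T : Finset (Fin n), T.card ≤ k ∧ x = R2 C b T} ≤ R2 C b (S k) ∧
      (1 - Real.exp (-(lambdaMinK C (2 * k)) ^ 2)) *
          sSup {x | ∃ T : Finset (Fin n), T.card ≤ k ∧ x = R2 C b T} ≤ R2 C b (S k) := by
  classical
  set μ := lambdaMinK C (2 * k) with hμdef
  have hμpos : 0 < μ := lmk_pos C hC hk1 h2k
  have hμ1 : μ ≤ 1 := lmk_le_one C hC hdiag hk1 h2k
  have hk0 : (0:ℝ) < (k:ℝ) := by exact_mod_cast Nat.pos_of_ne_zero (by omega)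
  set Ω := {x | ∃ T : Finset (Fin n), T.card ≤ k ∧ x = R2 C b T} with hΩ
  have hΩfin : Ω.Finite := by
    apply Set.Finite.subset (Set.finite_range (fun T : Finset (Fin n) => R2 C b T))
    rintro x ⟨T, -, rfl⟩
    exact ⟨T, rfl⟩
  have hΩne : Ω.Nonempty := ⟨R2 C b ∅, ∅, by simp, rfl⟩
  set OPT := sSup Ω with hOPTdef
  obtain ⟨Tstar, hTstar_card, hTstar_eq⟩ := Set.Nonempty.csSup_mem hΩne hΩfin
  have hOPT0 : 0 ≤ OPT := by
    have hmem : R2 C b ∅ ∈ Ω := ⟨∅, by simp, rfl⟩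
    have h := le_csSup hΩfin.bddAbove hmem
    rwa [R2_empty] at h
  have hcard : ∀ j, j ≤ k → (S j).card = j := by
    intro j
    induction j with
    | zero => intro _; rw [hS0]; simp
    | succ i ih =>
        intro hik
        obtain ⟨m, hm, hins, -⟩ := hgreedy i (by omega)
        rw [hins, Finset.card_insert_of_notMem hm, ih (by omega)]
  have hchain : ∀ j, j < k → S j ⊆ S (j + 1) := by
    intro j hj
    obtain ⟨m, hm, hins, -⟩ := hgreedy j hj
    rw [hins]
    exact Finset.subset_insert _ _
  have hsub_le : ∀ d j, j + d ≤ k → S j ⊆ S (j + d) := by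
    intro d
    induction d with
    | zero => intro j _; exact subset_rfl
    | succ e ih =>
        intro j h
        have h1 : S j ⊆ S (j + e) := ih j (by omega)
        have h2 : S (j + e) ⊆ S (j + e + 1) := hchain (j + e) (by omega)
        rw [show j + (e + 1) = j + e + 1 by omega]
        exact h1.trans h2
  have hsubk : ∀ j, j ≤ k → S j ⊆ S k := by
    intro j hj
    have := hsub_le (k - j) j (by omega)
    rwa [show j + (k - j) = k by omega] at this
  -- common per-step data
  have stepcore : ∀ j, j < k → ∃ m ∉ S j, S (j + 1) = insert m (S j) ∧
      (∀ x ∉ S j, |resCov C b (S j) x| ≤ |resCov C b (S j) m|) ∧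
      R2 C b (S j) + (resCov C b (S j) m) ^ 2 ≤ R2 C b (S (j + 1)) := by
    intro j hj
    obtain ⟨m, hm, hins, hmax⟩ := hgreedy j hj
    refine ⟨m, hm, hins, hmax, ?_⟩
    rw [hins]
    exact gain_lower C b hC hdiag (S j) m
  -- the two step inequalities
  have step2 : ∀ j, j < k → μ * (OPT - R2 C b (S j)) ≤
      (k:ℝ) * (R2 C b (S (j + 1)) - R2 C b (S j)) := by
    intro j hj
    obtain ⟨m, hm, hins, hmax, hgain⟩ := stepcore j hj
    set r := resCov C b (S j) m with hr
    have hΔ0 : 0 ≤ R2 C b (S (j + 1)) - R2 C b (S j) := by nlinarith [sq_nonneg r]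
    by_cases hT' : Tstar \ S j = ∅
    · have hTs : Tstar ⊆ S j := Finset.sdiff_eq_empty_iff_subset.mp hT'
      have hOPTeq : OPT = R2 C b Tstar := hTstar_eq
      have hOPTle : OPT ≤ R2 C b (S j) := hOPTeq ▸ R2_mono C b hC hTs
      have h1 : μ * (OPT - R2 C b (S j)) ≤ 0 :=
        mul_nonpos_of_nonneg_of_nonpos hμpos.le (by linarith)
      have h2 : 0 ≤ (k:ℝ) * (R2 C b (S (j + 1)) - R2 C b (S j)) :=
        mul_nonneg hk0.le hΔ0
      linarith
    · set T' := Tstar \ S j with hT'def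
      have hT'ne : T'.Nonempty := Finset.nonempty_of_ne_empty hT'
      have hT'k : T'.card ≤ k := le_trans (Finset.card_le_card Finset.sdiff_subset) hTstar_card
      have hdisj : Disjoint (S j) T' := Finset.disjoint_sdiff
      have hTsub : Tstar ⊆ S j ∪ T' := by
        intro x hx
        rw [Finset.mem_union, hT'def, Finset.mem_sdiff]
        by_cases h : x ∈ S j
        · exact Or.inl h
        · exact Or.inr ⟨hx, h⟩
      have hOPTeq : OPT = R2 C b Tstar := hTstar_eq
      have hOPTle : OPT ≤ R2 C b (S j ∪ T') := hOPTeq ▸ R2_mono C b hC hTsub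
      have hcardST : (S j ∪ T').card ≤ 2 * k := by
        calc (S j ∪ T').card ≤ (S j).card + T'.card := Finset.card_union_le _ _
          _ ≤ j + k := by
              have := hcard j (le_of_lt hj)
              omega
          _ ≤ 2 * k := by omega
      have hjoint := gain_upper C b hC hk1 h2k (S j) T' hdisj hcardST
      have hsumr : ∑ i ∈ T', (resCov C b (S j) i) ^ 2 ≤ (k:ℝ) * r ^ 2 := by
        calc ∑ i ∈ T', (resCov C b (S j) i) ^ 2 ≤ ∑ _i ∈ T', r ^ 2 := by
              apply Finset.sum_le_sum
              intro i hi
              have hiS : i ∉ S j := (Finset.mem_sdiff.mp (hT'def ▸ hi)).2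
              have habs := hmax i hiS
              calc (resCov C b (S j) i) ^ 2 = |resCov C b (S j) i| ^ 2 := (sq_abs _).symm
                _ ≤ |r| ^ 2 := pow_le_pow_left₀ (abs_nonneg _) habs 2
                _ = r ^ 2 := sq_abs _
          _ = (T'.card : ℝ) * r ^ 2 := by rw [Finset.sum_const, nsmul_eq_mul]
          _ ≤ (k:ℝ) * r ^ 2 := by
              apply mul_le_mul_of_nonneg_right _ (sq_nonneg r)
              exact_mod_cast hT'k
      have hkr : (k:ℝ) * r ^ 2 ≤ (k:ℝ) * (R2 C b (S (j + 1)) - R2 C b (S j)) := by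
        apply mul_le_mul_of_nonneg_left _ hk0.le
        linarith
      have h1 : OPT - R2 C b (S j) ≤ ((k:ℝ) * (R2 C b (S (j + 1)) - R2 C b (S j))) / μ := by
        have h2 : OPT - R2 C b (S j) ≤ (∑ i ∈ T', (resCov C b (S j) i) ^ 2) / μ := by
          linarith
        calc OPT - R2 C b (S j) ≤ (∑ i ∈ T', (resCov C b (S j) i) ^ 2) / μ := h2
          _ ≤ ((k:ℝ) * (R2 C b (S (j + 1)) - R2 C b (S j))) / μ := by
              rw [div_le_div_iff_of_pos_right hμpos]
              linarith
      have h3 := (le_div_iff₀ hμpos).mp h1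
      linarith [h3]
  have step1 : ∀ j, j < k → (γ * μ) * (OPT - R2 C b (S j)) ≤
      (k:ℝ) * (R2 C b (S (j + 1)) - R2 C b (S j)) := by
    intro j hj
    obtain ⟨m, hm, hins, hmax, hgain⟩ := stepcore j hj
    set r := resCov C b (S j) m with hr
    have hΔ0 : 0 ≤ R2 C b (S (j + 1)) - R2 C b (S j) := by nlinarith [sq_nonneg r]
    by_cases hT' : Tstar \ S j = ∅
    · have hTs : Tstar ⊆ S j := Finset.sdiff_eq_empty_iff_subset.mp hT'
      have hOPTeq : OPT = R2 C b Tstar := hTstar_eq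
      have hOPTle : OPT ≤ R2 C b (S j) := hOPTeq ▸ R2_mono C b hC hTs
      have h1 : (γ * μ) * (OPT - R2 C b (S j)) ≤ 0 :=
        mul_nonpos_of_nonneg_of_nonpos (by positivity) (by linarith)
      have h2 : 0 ≤ (k:ℝ) * (R2 C b (S (j + 1)) - R2 C b (S j)) :=
        mul_nonneg hk0.le hΔ0
      linarith
    · set T' := Tstar \ S j with hT'def
      have hT'ne : T'.Nonempty := Finset.nonempty_of_ne_empty hT'
      have hT'k : T'.card ≤ k := le_trans (Finset.card_le_card Finset.sdiff_subset) hTstar_card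
      have hdisjT : Disjoint (S j) T' := Finset.disjoint_sdiff
      have hTsub : Tstar ⊆ S j ∪ T' := by
        intro x hx
        rw [Finset.mem_union, hT'def, Finset.mem_sdiff]
        by_cases h : x ∈ S j
        · exact Or.inl h
        · exact Or.inr ⟨hx, h⟩
      have hOPTeq : OPT = R2 C b Tstar := hTstar_eq
      have hOPTle : OPT ≤ R2 C b (S j ∪ T') := hOPTeq ▸ R2_mono C b hC hTsub
      have hsubbed := hsub (S j) T' (hsubk j (le_of_lt hj)) hdisjT hT'ne hT'k
      -- per-element gain bound
      have hper : ∀ i ∈ T', R2 C b (S j ∪ {i}) - R2 C b (S j) ≤ (resCov C b (S j) i) ^ 2 / μ := by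
        intro i hi
        have hiS : i ∉ S j := (Finset.mem_sdiff.mp (hT'def ▸ hi)).2
        have hdisj1 : Disjoint (S j) {i} := Finset.disjoint_singleton_right.mpr hiS
        have hcard1 : (S j ∪ {i}).card ≤ 2 * k := by
          calc (S j ∪ {i}).card ≤ (S j).card + ({i} : Finset (Fin n)).card :=
                Finset.card_union_le _ _
            _ ≤ j + 1 := by
                have := hcard j (le_of_lt hj)
                simp [this]
            _ ≤ 2 * k := by omega
        have := gain_upper C b hC hk1 h2k (S j) {i} hdisj1 hcard1
        rw [Finset.sum_singleton] at this
        linarith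
      have hsumper : ∑ i ∈ T', (R2 C b (S j ∪ {i}) - R2 C b (S j)) ≤
          ((k:ℝ) * r ^ 2) / μ := by
        calc ∑ i ∈ T', (R2 C b (S j ∪ {i}) - R2 C b (S j))
            ≤ ∑ i ∈ T', (resCov C b (S j) i) ^ 2 / μ := Finset.sum_le_sum hper
          _ = (∑ i ∈ T', (resCov C b (S j) i) ^ 2) / μ := by rw [Finset.sum_div]
          _ ≤ ((k:ℝ) * r ^ 2) / μ := by
              rw [div_le_div_iff_of_pos_right hμpos]
              calc ∑ i ∈ T', (resCov C b (S j) i) ^ 2 ≤ ∑ _i ∈ T', r ^ 2 := by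
                    apply Finset.sum_le_sum
                    intro i hi
                    have hiS : i ∉ S j := (Finset.mem_sdiff.mp (hT'def ▸ hi)).2
                    have habs := hmax i hiS
                    calc (resCov C b (S j) i) ^ 2 = |resCov C b (S j) i| ^ 2 := (sq_abs _).symm
                      _ ≤ |r| ^ 2 := pow_le_pow_left₀ (abs_nonneg _) habs 2
                      _ = r ^ 2 := sq_abs _
                _ = (T'.card : ℝ) * r ^ 2 := by rw [Finset.sum_const, nsmul_eq_mul]
                _ ≤ (k:ℝ) * r ^ 2 := by
                    apply mul_le_mul_of_nonneg_right _ (sq_nonneg r)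
                    exact_mod_cast hT'k
      have hγOPT : γ * (OPT - R2 C b (S j)) ≤ ((k:ℝ) * r ^ 2) / μ := by
        calc γ * (OPT - R2 C b (S j)) ≤ γ * (R2 C b (S j ∪ T') - R2 C b (S j)) := by
              apply mul_le_mul_of_nonneg_left _ hγ.le
              linarith
          _ ≤ ∑ i ∈ T', (R2 C b (S j ∪ {i}) - R2 C b (S j)) := hsubbed
          _ ≤ ((k:ℝ) * r ^ 2) / μ := hsumper
      have hkr : (k:ℝ) * r ^ 2 ≤ (k:ℝ) * (R2 C b (S (j + 1)) - R2 C b (S j)) := by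
        apply mul_le_mul_of_nonneg_left _ hk0.le
        linarith
      have h1 : γ * (OPT - R2 C b (S j)) ≤
          ((k:ℝ) * (R2 C b (S (j + 1)) - R2 C b (S j))) / μ := by
        calc γ * (OPT - R2 C b (S j)) ≤ ((k:ℝ) * r ^ 2) / μ := hγOPT
          _ ≤ ((k:ℝ) * (R2 C b (S (j + 1)) - R2 C b (S j))) / μ := by
              rw [div_le_div_iff_of_pos_right hμpos]
              exact hkr
      have h3 := (le_div_iff₀ hμpos).mp h1
      nlinarith [h3]
  -- the exponential-decay induction
  have final : ∀ c : ℝ, 0 ≤ c → c ≤ (k:ℝ) →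
      (∀ j, j < k → c * (OPT - R2 C b (S j)) ≤
        (k:ℝ) * (R2 C b (S (j + 1)) - R2 C b (S j))) →
      (1 - Real.exp (-c)) * OPT ≤ R2 C b (S k) := by
    intro c hc0 hck hstep
    have hfac : 0 ≤ 1 - c / (k:ℝ) := by
      rw [sub_nonneg, div_le_one hk0]
      exact hck
    have key : ∀ j, j ≤ k → OPT - R2 C b (S j) ≤ (1 - c / (k:ℝ)) ^ j * OPT := by
      intro j
      induction j with
      | zero =>
          intro _
          rw [hS0, R2_empty]
          simp
      | succ i ih =>
          intro h
          have h1 := ih (by omega)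
          have h2 := hstep i (by omega)
          have hdivk : c / (k:ℝ) * (OPT - R2 C b (S i)) ≤
              R2 C b (S (i + 1)) - R2 C b (S i) := by
            rw [div_mul_eq_mul_div, div_le_iff₀ hk0]
            linarith
          have h3 : OPT - R2 C b (S (i + 1)) ≤
              (1 - c / (k:ℝ)) * (OPT - R2 C b (S i)) := by
            have hexpand : (1 - c / (k:ℝ)) * (OPT - R2 C b (S i)) =
                (OPT - R2 C b (S i)) - c / (k:ℝ) * (OPT - R2 C b (S i)) := by ring
            rw [hexpand]
            linarith
          calc OPT - R2 C b (S (i + 1)) ≤ (1 - c / (k:ℝ)) * (OPT - R2 C b (S i)) := h3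
            _ ≤ (1 - c / (k:ℝ)) * ((1 - c / (k:ℝ)) ^ i * OPT) :=
                mul_le_mul_of_nonneg_left h1 hfac
            _ = (1 - c / (k:ℝ)) ^ (i + 1) * OPT := by ring
    have hx : (1 - c / (k:ℝ)) ^ k ≤ Real.exp (-c) := by
      have h2 : 1 - c / (k:ℝ) ≤ Real.exp (-(c / (k:ℝ))) := by
        have := Real.add_one_le_exp (-(c / (k:ℝ)))
        linarith
      calc (1 - c / (k:ℝ)) ^ k ≤ (Real.exp (-(c / (k:ℝ)))) ^ k :=
            pow_le_pow_left₀ hfac h2 k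
        _ = Real.exp ((k:ℝ) * (-(c / (k:ℝ)))) := by rw [Real.exp_nat_mul]
        _ = Real.exp (-c) := by
            congr 1
            field_simp
    have hk' := key k le_rfl
    have h4 : (1 - c / (k:ℝ)) ^ k * OPT ≤ Real.exp (-c) * OPT :=
      mul_le_mul_of_nonneg_right hx hOPT0
    nlinarith [hk', h4]
  constructor
  · exact final (γ * μ) (by positivity) (by nlinarith) step1
  · have h1 := final μ hμpos.le (by linarith [hk0, (by exact_mod_cast hk1 : (1:ℝ) ≤ (k:ℝ))]) step2
    have h2 : Real.exp (-μ) ≤ Real.exp (-μ ^ 2) := by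
      apply Real.exp_le_exp.mpr
      nlinarith
    have h3 : (1 - Real.exp (-μ ^ 2)) * OPT ≤ (1 - Real.exp (-μ)) * OPT := by
      apply mul_le_mul_of_nonneg_right _ hOPT0
      linarith
    calc (1 - Real.exp (-μ ^ 2)) * OPT ≤ (1 - Real.exp (-μ)) * OPT := h3
      _ ≤ R2 C b (S k) := h1
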